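/- arXiv:1405.2722 — 3 statements merged into one kernel-verified Lean document; each statement's English description precedes it below -/
import Mathlib

section
/- For all real x and all positive real ξ, the log-logistic function satisfies log g(x) ≥ log g(ξ) + (x-ξ)/2 - λ(ξ)(x² - ξ²), where g(x) = 1/(1+e^{-x}) and λ(ξ) = (g(ξ) - 1/2)/(2ξ). -/
noncomputable def g (x : ℝ) : ℝ := (1 + Real.exp (-x))⁻¹

noncomputable def lam (ξ : ℝ) : ℝ := (g ξ - 1/2) / (2 * ξ)

open Real Set

/-- `t ↦ t * cosh t - sinh t` is monotone on `[0, ∞)`. -/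
lemma aux_mul_cosh_sub_sinh_mono : MonotoneOn (fun t : ℝ => t * Real.cosh t - Real.sinh t) (Ici 0) := by
  apply monotoneOn_of_deriv_nonneg (convex_Ici 0)
  · exact ((continuous_id.mul Real.continuous_cosh).sub Real.continuous_sinh).continuousOn
  · intro t ht
    exact (((hasDerivAt_id t).mul (Real.hasDerivAt_cosh t)).sub (Real.hasDerivAt_sinh t)).differentiableAt.differentiableWithinAt
  · intro t ht
    rw [interior_Ici, mem_Ioi] at ht
    have hd : HasDerivAt (fun t : ℝ => t * Real.cosh t - Real.sinh t)
        (1 * Real.cosh t + t * Real.sinh t - Real.cosh t) t :=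
      ((hasDerivAt_id t).mul (Real.hasDerivAt_cosh t)).sub (Real.hasDerivAt_sinh t)
    rw [hd.deriv]
    nlinarith [Real.sinh_pos_iff.mpr ht, ht]

/-- `sinh t ≤ t * cosh t` for `t ≥ 0`. -/
lemma aux_sinh_le (t : ℝ) (ht : 0 ≤ t) : Real.sinh t ≤ t * Real.cosh t := by
  have := aux_mul_cosh_sub_sinh_mono (self_mem_Ici) ht ht
  simpa using this

/-- `sinh t / t` is monotone on `(0, ∞)`. -/
lemma aux_sinh_div_mono : MonotoneOn (fun t : ℝ => Real.sinh t / t) (Ioi 0) := by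
  apply monotoneOn_of_deriv_nonneg (convex_Ioi 0)
  · exact ContinuousOn.div Real.continuous_sinh.continuousOn continuousOn_id
      (fun t ht => ne_of_gt ht)
  · intro t ht
    rw [interior_Ioi, mem_Ioi] at ht
    exact ((Real.hasDerivAt_sinh t).div (hasDerivAt_id t) (ne_of_gt ht)).differentiableAt.differentiableWithinAt
  · intro t ht
    rw [interior_Ioi, mem_Ioi] at ht
    have hd : HasDerivAt (fun t : ℝ => Real.sinh t / t)
        ((Real.cosh t * t - Real.sinh t * 1) / t ^ 2) t :=
      (Real.hasDerivAt_sinh t).div (hasDerivAt_id t) (ne_of_gt ht)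
    rw [hd.deriv]
    have h1 : Real.sinh t ≤ t * Real.cosh t := aux_sinh_le t ht.le
    have h2 : (0:ℝ) < t ^ 2 := by positivity
    apply div_nonneg _ h2.le
    nlinarith

/-- `s * sinh d ≤ d * sinh s` for `0 ≤ d ≤ s`. -/
lemma aux_B {d s : ℝ} (hd : 0 ≤ d) (hds : d ≤ s) : s * Real.sinh d ≤ d * Real.sinh s := by
  rcases eq_or_lt_of_le hd with h0 | h0
  · simp [← h0]
  · have hs : 0 < s := lt_of_lt_of_le h0 hds
    have := aux_sinh_div_mono (mem_Ioi.2 h0) (mem_Ioi.2 hs) hds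
    simp only at this
    rw [div_le_div_iff₀ h0 hs] at this
    linarith

/-- `a * tanh b ≤ b * tanh a` for `0 < a ≤ b`. -/
lemma aux_C {a b : ℝ} (ha : 0 < a) (hab : a ≤ b) : a * Real.tanh b ≤ b * Real.tanh a := by
  have hb : 0 < b := lt_of_lt_of_le ha hab
  have hB := aux_B (sub_nonneg.2 hab) (by linarith : b - a ≤ b + a)
  have hsub : Real.sinh (b - a) = Real.sinh b * Real.cosh a - Real.cosh b * Real.sinh a :=
    Real.sinh_sub b a
  have hadd : Real.sinh (b + a) = Real.sinh b * Real.cosh a + Real.cosh b * Real.sinh a :=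
    Real.sinh_add b a
  have hkey : a * Real.sinh b * Real.cosh a ≤ b * Real.sinh a * Real.cosh b := by
    nlinarith [hB, hsub, hadd]
  rw [Real.tanh_eq_sinh_div_cosh, Real.tanh_eq_sinh_div_cosh]
  have hca : 0 < Real.cosh a := Real.cosh_pos a
  have hcb : 0 < Real.cosh b := Real.cosh_pos b
  rw [mul_comm a, mul_comm b, div_mul_eq_mul_div, div_mul_eq_mul_div,
      div_le_div_iff₀ hcb hca]
  nlinarith [hkey]

/-- `g y - 1/2 = tanh (y/2) / 2`. -/
lemma aux_g_tanh (y : ℝ) : g y - 1/2 = Real.tanh (y/2) / 2 := by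
  rw [Real.tanh_eq_sinh_div_cosh, Real.sinh_eq, Real.cosh_eq]
  unfold g
  have h1 : (0:ℝ) < 1 + Real.exp (-y) := by positivity
  have h2 : (0:ℝ) < Real.exp (y/2) + Real.exp (-(y/2)) := by positivity
  have h3 : Real.exp (y/2) * Real.exp (-(y/2)) = 1 := by
    rw [← Real.exp_add]; norm_num
  have h4 : Real.exp (y/2) * Real.exp (y/2) = Real.exp y := by
    rw [← Real.exp_add]; norm_num
  have h5 : Real.exp (-(y/2)) * Real.exp (-(y/2)) = Real.exp (-y) := by
    rw [← Real.exp_add]; ring_nf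
  have h6 : Real.exp (-y) * Real.exp (y/2) = Real.exp (-(y/2)) := by
    rw [← Real.exp_add]; ring_nf
  field_simp
  ring_nf
  ring_nf at h6
  linarith [h6]

/-- Jaakkola–Jordan quadratic lower bound on the log-logistic function. -/
theorem jaakkola_bound (x ξ : ℝ) (hξ : 0 < ξ) :
    Real.log (g x) ≥ Real.log (g ξ) + (x - ξ) / 2 - lam ξ * (x ^ 2 - ξ ^ 2) := by
  set lm := lam ξ with hlm
  -- define φ
  set φ : ℝ → ℝ := fun y => y/2 - lm * y^2 + Real.log (1 + Real.exp (-y)) with hφ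
  have hpos : ∀ y : ℝ, (0:ℝ) < 1 + Real.exp (-y) := fun y => by positivity
  -- derivative of φ
  have hderiv : ∀ y : ℝ, HasDerivAt φ (g y - 1/2 - 2 * lm * y) y := by
    intro y
    have h1 : HasDerivAt (fun y : ℝ => 1 + Real.exp (-y)) (-Real.exp (-y)) y := by
      have := (Real.hasDerivAt_exp (-y)).comp y ((hasDerivAt_id y).neg)
      simpa using (this.const_add 1)
    have h2 : HasDerivAt (fun y : ℝ => Real.log (1 + Real.exp (-y)))
        (-Real.exp (-y) / (1 + Real.exp (-y))) y := h1.log (ne_of_gt (hpos y))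
    have h3 : HasDerivAt (fun y : ℝ => y/2 - lm * y^2)
        (1/2 - lm * (2 * y)) y := by
      have ha : HasDerivAt (fun y : ℝ => y/2) (1/2) y := by
        simpa using (hasDerivAt_id y).div_const 2
      have hb : HasDerivAt (fun y : ℝ => lm * y^2) (lm * (2 * y)) y := by
        have := (hasDerivAt_pow 2 y).const_mul lm
        simpa using this
      exact ha.sub hb
    have := h3.add h2
    refine this.congr_deriv ?_
    unfold g
    have hy := hpos y
    field_simp
    ring
  have hdiff : ∀ y : ℝ, DifferentiableAt ℝ φ y := fun y => (hderiv y).differentiableAt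
  have hcont : Continuous φ := by
    apply continuous_iff_continuousAt.2
    intro y; exact (hdiff y).continuousAt
  -- sign of derivative
  have hderiv_eq : ∀ y : ℝ, deriv φ y = Real.tanh (y/2) / 2 - Real.tanh (ξ/2) / (2*ξ) * y := by
    intro y
    rw [(hderiv y).deriv, aux_g_tanh y]
    have : lm = Real.tanh (ξ/2) / 2 / (2 * ξ) := by
      rw [hlm]; unfold lam; rw [aux_g_tanh ξ]
    rw [this]
    field_simp
  -- φ is antitone on [ξ, ∞)
  have hanti : AntitoneOn φ (Ici ξ) := by
    apply antitoneOn_of_deriv_nonpos (convex_Ici ξ) hcont.continuousOn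
      (fun y _ => (hdiff y).differentiableWithinAt)
    intro y hy
    rw [interior_Ici, mem_Ioi] at hy
    rw [hderiv_eq]
    have hC := aux_C (by linarith : (0:ℝ) < ξ/2) (by linarith : ξ/2 ≤ y/2)
    have hy0 : 0 < y := lt_trans hξ hy
    rw [sub_nonpos, div_mul_eq_mul_div,
        div_le_div_iff₀ (by norm_num : (0:ℝ) < 2) (by linarith : (0:ℝ) < 2*ξ)]
    nlinarith [hC]
  -- φ is monotone on [0, ξ]
  have hmono : MonotoneOn φ (Icc 0 ξ) := by
    apply monotoneOn_of_deriv_nonneg (convex_Icc 0 ξ) hcont.continuousOn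
      (fun y _ => (hdiff y).differentiableWithinAt)
    intro y hy
    rw [interior_Icc, mem_Ioo] at hy
    rw [hderiv_eq]
    have hC := aux_C (by linarith [hy.1] : (0:ℝ) < y/2) (by linarith [hy.2] : y/2 ≤ ξ/2)
    have hy0 : 0 < y := hy.1
    rw [sub_nonneg, div_mul_eq_mul_div, div_le_div_iff₀ (by linarith : (0:ℝ) < 2*ξ)
        (by norm_num : (0:ℝ) < 2)]
    nlinarith [hC]
  -- key : for y ≥ 0, φ y ≤ φ ξ
  have hkey : ∀ y : ℝ, 0 ≤ y → φ y ≤ φ ξ := by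
    intro y hy
    rcases le_total y ξ with h | h
    · exact hmono (mem_Icc.2 ⟨hy, h⟩) (mem_Icc.2 ⟨hξ.le, le_rfl⟩) h
    · exact hanti (self_mem_Ici) (mem_Ici.2 h) h
  -- evenness of φ
  have heven : ∀ y : ℝ, φ y = φ (-y) := by
    intro y
    simp only [hφ]
    have h1 : Real.log (1 + Real.exp (-y)) = Real.log (1 + Real.exp y) - y := by
      have : (1 : ℝ) + Real.exp (-y) = (1 + Real.exp y) * Real.exp (-y) := by
        rw [add_mul, one_mul, ← Real.exp_add]
        norm_num
        ring
      rw [this, Real.log_mul (by positivity) (by positivity), Real.log_exp]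
      ring
    rw [h1]
    simp only [neg_neg]
    ring
  have hall : ∀ y : ℝ, φ y ≤ φ ξ := by
    intro y
    rcases le_total 0 y with h | h
    · exact hkey y h
    · rw [heven y]; exact hkey (-y) (by linarith)
  -- conclude
  have hx := hall x
  have hlog : ∀ y : ℝ, Real.log (g y) = -Real.log (1 + Real.exp (-y)) := by
    intro y; unfold g; rw [Real.log_inv]
  rw [ge_iff_le, hlog x, hlog ξ]
  simp only [hφ] at hx
  linarith
end

section
/- The function λ(ξ) = (g(ξ) - 1/2)/(2ξ), where g is the logistic sigmoid, is strictly decreasing on (0, ∞). -/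
lemma denom_ne (x : ℝ) : 1 + Real.exp (-x) ≠ 0 := by positivity

lemma hasDerivAt_lam {ξ : ℝ} (hξ : 0 < ξ) :
    HasDerivAt lam ((Real.exp (-ξ) / (1 + Real.exp (-ξ)) ^ 2 * (2 * ξ)
      - (g ξ - 1/2) * 2) / (2 * ξ) ^ 2) ξ := by
  have h1 : HasDerivAt (fun x : ℝ => 1 + Real.exp (-x)) (-Real.exp (-ξ)) ξ := by
    simpa using ((Real.hasDerivAt_exp (-ξ)).comp ξ (hasDerivAt_neg ξ)).const_add 1
  have hg : HasDerivAt g (Real.exp (-ξ) / (1 + Real.exp (-ξ)) ^ 2) ξ := by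
    have := h1.inv (denom_ne ξ)
    rw [show g = (fun x => 1 + Real.exp (-x))⁻¹ from rfl]
    simpa [neg_neg, neg_div] using this
  have hnum : HasDerivAt (fun x => g x - 1/2)
      (Real.exp (-ξ) / (1 + Real.exp (-ξ)) ^ 2) ξ := hg.sub_const _
  have hden : HasDerivAt (fun x : ℝ => 2 * x) 2 ξ := by
    simpa using (hasDerivAt_id ξ).const_mul 2
  exact hnum.div hden (by positivity)

lemma deriv_lam_neg {ξ : ℝ} (hξ : 0 < ξ) : deriv lam ξ < 0 := by
  rw [(hasDerivAt_lam hξ).deriv]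
  apply div_neg_of_neg_of_pos _ (by positivity)
  have he : Real.exp (-ξ) * Real.exp ξ = 1 := by
    rw [← Real.exp_add]; simp
  have hsinh : ξ < Real.sinh ξ := Real.self_lt_sinh_iff.mpr hξ
  rw [Real.sinh_eq] at hsinh
  have hepos : 0 < Real.exp (-ξ) := Real.exp_pos _
  have hEpos : 0 < Real.exp ξ := Real.exp_pos _
  have h1 : (0:ℝ) < 1 + Real.exp (-ξ) := by positivity
  rw [g]
  rw [sub_neg, div_mul_eq_mul_div, div_lt_iff₀ (by positivity)]
  have hginv : ((1 + Real.exp (-ξ))⁻¹ - 1/2) * 2 = (1 - Real.exp (-ξ)) / (1 + Real.exp (-ξ)) := by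
    field_simp; ring
  rw [hginv, div_mul_eq_mul_div, lt_div_iff₀ h1]
  nlinarith [sq_nonneg (1 + Real.exp (-ξ)), mul_pos hepos hξ]

/-- The coefficient `λ` of the Jaakkola–Jordan bound is strictly decreasing on `(0, ∞)`. -/
theorem lam_strictAntiOn : StrictAntiOn lam (Set.Ioi (0 : ℝ)) := by
  apply strictAntiOn_of_deriv_neg (convex_Ioi 0)
  · intro x hx
    exact (hasDerivAt_lam hx).continuousAt.continuousWithinAt
  · intro x hx
    rw [interior_Ioi] at hx
    exact deriv_lam_neg hx
end

section
/- Fix c > 0 and define F(ξ) = log g(ξ) - ξ/2 - λ(ξ)(c - ξ²) on (0,∞), where g is the logistic sigmoid and λ(ξ) = (g(ξ)-1/2)/(2ξ). Then F'(ξ) = -λ'(ξ)(c - ξ²), and consequently ξ̂ = √c is a critical point of F. -/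
lemma g_pos (x : ℝ) : 0 < g x := by
  unfold g
  positivity

lemma hasDerivAt_g (x : ℝ) : HasDerivAt g (g x * (1 - g x)) x := by
  have h1 : HasDerivAt (fun x : ℝ => 1 + Real.exp (-x)) (-Real.exp (-x)) x := by
    have he : HasDerivAt (fun x : ℝ => Real.exp (-x)) (Real.exp (-x) * (-1)) x :=
      (Real.hasDerivAt_exp (-x)).comp x (hasDerivAt_neg x)
    simpa using he.const_add 1
  have hne : (1 : ℝ) + Real.exp (-x) ≠ 0 := by positivity
  have := h1.inv hne
  refine this.congr_deriv ?_
  unfold g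
  field_simp
  ring

lemma hasDerivAt_lam_s14 (ξ : ℝ) (hξ : 0 < ξ) : HasDerivAt lam (deriv lam ξ) ξ := by
  have hd : DifferentiableAt ℝ lam ξ := by
    apply DifferentiableAt.div
    · exact ((hasDerivAt_g ξ).differentiableAt).sub_const _
    · exact (differentiableAt_const _).mul differentiableAt_id
    · positivity
  exact hd.hasDerivAt

/-- The ξ-dependent part of the variational lower bound,
`F(ξ) = log g(ξ) - ξ/2 - λ(ξ)(c - ξ²)`, satisfies `F'(ξ) = -λ'(ξ)(c - ξ²)`,
so `ξ̂ = √c` is a critical point of `F`. -/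
theorem optimal_xi (c : ℝ) (hc : 0 < c) :
    (∀ ξ : ℝ, 0 < ξ →
      HasDerivAt (fun ξ => Real.log (g ξ) - ξ / 2 - lam ξ * (c - ξ ^ 2))
        (-(deriv lam ξ) * (c - ξ ^ 2)) ξ) ∧
    HasDerivAt (fun ξ => Real.log (g ξ) - ξ / 2 - lam ξ * (c - ξ ^ 2))
      0 (Real.sqrt c) := by
  have key : ∀ ξ : ℝ, 0 < ξ →
      HasDerivAt (fun ξ => Real.log (g ξ) - ξ / 2 - lam ξ * (c - ξ ^ 2))
        (-(deriv lam ξ) * (c - ξ ^ 2)) ξ := by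
    intro ξ hξ
    have hgpos := g_pos ξ
    have hlog : HasDerivAt (fun x => Real.log (g x)) (1 - g ξ) ξ := by
      have := (hasDerivAt_g ξ).log hgpos.ne'
      convert this using 1
      field_simp
    have hhalf : HasDerivAt (fun x : ℝ => x / 2) (1 / 2) ξ := by
      simpa using (hasDerivAt_id ξ).div_const 2
    have hprod : HasDerivAt (fun x => lam x * (c - x ^ 2))
        (deriv lam ξ * (c - ξ ^ 2) + lam ξ * (-(2 * ξ ^ 1))) ξ := by
      have := (hasDerivAt_lam_s14 ξ hξ).mul ((hasDerivAt_const ξ c).sub (hasDerivAt_pow 2 ξ))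
      refine this.congr_deriv ?_
      norm_num
    have total := (hlog.sub hhalf).sub hprod
    refine total.congr_deriv ?_
    have h2 : 2 * ξ * lam ξ = g ξ - 1/2 := by
      unfold lam
      field_simp
    linear_combination h2
  refine ⟨key, ?_⟩
  have hs : 0 < Real.sqrt c := Real.sqrt_pos.mpr hc
  have h0 : c - Real.sqrt c ^ 2 = 0 := by
    rw [Real.sq_sqrt hc.le]
    ring
  have := key _ hs
  rw [h0] at this
  simpa using this
end
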